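/- In the tensor algebra A = TensorAlgebra ℝ (ℝ^d), for every k ≥ 1 and every function i : {1, …, k} → {1, …, d}: π_k( Σ_{S ⊆ {1,…,k}} (−1)^{k − |S|} · E_k(𝟙_S(1) · e_{i(1)}) * E_k(𝟙_S(2) · e_{i(2)}) * ⋯ * E_k(𝟙_S(k) · e_{i(k)}) ) = ι(e_{i(1)}) * ι(e_{i(2)}) * ⋯ * ι(e_{i(k)}), where the sum is over all subsets S of {1, …, k}, |S| is the cardinality of S, and 𝟙_S(j) equals 1 if j ∈ S and 0 otherwise. -/

import Mathlib

open TensorAlgebra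

/-- The truncated exponential `E_N(v) = Σ_{m=0}^{N} (1/m!) ι(v)^m` in the tensor algebra. -/
noncomputable def truncExp {d : ℕ} (N : ℕ) (v : Fin d → ℝ) :
    TensorAlgebra ℝ (Fin d → ℝ) :=
  ∑ m ∈ Finset.range (N + 1), ((m.factorial : ℝ))⁻¹ • TensorAlgebra.ι ℝ v ^ m

/-- The projection onto the degree-`m` homogeneous component of the tensor algebra, for its
standard grading in which `ι(ℝ^d)` is the degree-1 component. -/
noncomputable def degProj (d m : ℕ) :
    TensorAlgebra ℝ (Fin d → ℝ) →ₗ[ℝ] TensorAlgebra ℝ (Fin d → ℝ) :=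
  GradedAlgebra.proj
    (fun n : ℕ =>
      LinearMap.range (TensorAlgebra.ι ℝ : (Fin d → ℝ) →ₗ[ℝ] TensorAlgebra ℝ (Fin d → ℝ)) ^ n)
    m

section Aux

variable {A : Type*} [Ring A] [Algebra ℝ A]

/-- Pull scalars out of an ordered list product. -/
lemma aux_list_prod_smul : ∀ (k : ℕ) (a : Fin k → ℝ) (x : Fin k → A),
    (List.ofFn fun j => a j • x j).prod = (∏ j, a j) • (List.ofFn fun j => x j).prod := by
  intro k
  induction k with
  | zero => intro a x; simp
  | succ n ih =>
    intro a x
    rw [List.ofFn_succ, List.ofFn_succ, List.prod_cons, List.prod_cons,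
      ih (fun j => a j.succ) (fun j => x j.succ), Fin.prod_univ_succ, smul_mul_assoc,
      mul_smul_comm, mul_smul]

/-- Noncommutative expansion of an ordered product of sums. -/
lemma aux_list_prod_expand {β : Type*} [DecidableEq β] (t : Finset β) :
    ∀ (k : ℕ) (F : Fin k → β → A),
    (List.ofFn fun j => ∑ b ∈ t, F j b).prod
      = ∑ m ∈ Fintype.piFinset (fun _ : Fin k => t), (List.ofFn fun j => F j (m j)).prod := by
  intro k
  induction k with
  | zero =>
    intro F
    simp
  | succ n ih =>
    intro F
    have hsplit : (Fintype.piFinset (fun _ : Fin (n+1) => t)) =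
        ((t ×ˢ Fintype.piFinset (fun _ : Fin n => t)).map
          (Fin.consEquiv (fun _ : Fin (n+1) => β)).toEmbedding) := by
      have := Finset.filter_piFinset_eq_map_consEquiv (fun _ : Fin (n+1) => t)
        (fun _ => True)
      simp at this; exact this
    rw [hsplit, Finset.sum_map, List.ofFn_succ, List.prod_cons,
      ih (fun j => F j.succ), Finset.sum_mul_sum, Finset.sum_product]
    refine Finset.sum_congr rfl fun b _ => Finset.sum_congr rfl fun m _ => ?_
    simp only [Equiv.coe_toEmbedding, Fin.consEquiv_apply]
    rw [List.ofFn_succ, List.prod_cons]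
    simp [Fin.cons]

end Aux

/-- Inclusion–exclusion over subsets `S ⊆ {1, …, k}` of products of truncated exponentials of
(indicator-scaled) basis vectors recovers, at tensor level `k`, the monomial
`ι(e_{i(1)}) * ⋯ * ι(e_{i(k)})`. -/
lemma truncExp_zero {d : ℕ} (N : ℕ) : truncExp (d := d) N 0 = 1 := by
  unfold truncExp
  rw [map_zero, Finset.sum_eq_single 0 (fun m _ hm => by rw [zero_pow hm, smul_zero])
    (by simp)]
  simp only [pow_zero, Nat.factorial_zero, Nat.cast_one, inv_one, one_smul]

lemma aux_prod_pow_mem {d : ℕ} : ∀ (k : ℕ) (v : Fin k → (Fin d → ℝ)) (m : Fin k → ℕ),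
    (List.ofFn fun j => TensorAlgebra.ι ℝ (v j) ^ m j).prod ∈
      (LinearMap.range (TensorAlgebra.ι ℝ : (Fin d → ℝ) →ₗ[ℝ] TensorAlgebra ℝ (Fin d → ℝ)))
        ^ (∑ j, m j) := by
  intro k
  induction k with
  | zero =>
    intro v m
    rw [show (∑ j : Fin 0, m j) = 0 from rfl, pow_zero, List.ofFn_zero, List.prod_nil]
    exact Submodule.one_le.mp le_rfl
  | succ n ih =>
    intro v m
    rw [List.ofFn_succ, List.prod_cons, Fin.sum_univ_succ, pow_add]
    exact Submodule.mul_mem_mul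
      (Submodule.pow_mem_pow _ (LinearMap.mem_range_self _ _) _)
      (ih (fun j => v j.succ) (fun j => m j.succ))

/-- The equivalence between subsets of `Fin k` and boolean functions. -/
def finsetBoolEquiv {k : ℕ} : Finset (Fin k) ≃ (Fin k → Bool) where
  toFun S j := decide (j ∈ S)
  invFun c := Finset.univ.filter (fun j => c j = true)
  left_inv S := by ext j; simp
  right_inv c := by funext j; simp

theorem stmt9 {d : ℕ} (hd : 1 ≤ d) (k : ℕ) (hk : 1 ≤ k) (i : Fin k → Fin d) :
    degProj d k
      (∑ S : Finset (Fin k), (-1 : ℝ) ^ (k - S.card) •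
        (List.ofFn fun j : Fin k =>
          truncExp k (if j ∈ S then Pi.single (i j) (1 : ℝ) else 0)).prod) =
    (List.ofFn fun j : Fin k => TensorAlgebra.ι ℝ (Pi.single (i j) (1 : ℝ))).prod := by
  set A := TensorAlgebra ℝ (Fin d → ℝ) with hA
  set P : Submodule ℝ A :=
    LinearMap.range (TensorAlgebra.ι ℝ : (Fin d → ℝ) →ₗ[ℝ] A) with hP
  set f : Fin k → A := fun j => truncExp k (Pi.single (i j) (1 : ℝ)) with hf
  -- Step B: rewrite each summand, absorbing the sign into the product
  have hterm : ∀ S : Finset (Fin k),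
      (-1 : ℝ) ^ (k - S.card) •
        (List.ofFn fun j : Fin k =>
          truncExp k (if j ∈ S then Pi.single (i j) (1 : ℝ) else 0)).prod
      = (List.ofFn fun j : Fin k => if j ∈ S then f j else (-1 : A)).prod := by
    intro S
    have h1 : (fun j : Fin k => truncExp k (if j ∈ S then Pi.single (i j) (1 : ℝ) else 0))
        = fun j => if j ∈ S then f j else 1 := by
      funext j; split <;> simp [truncExp_zero, hf]
    have h2 : (fun j : Fin k => if j ∈ S then f j else (-1 : A))
        = fun j => (if j ∈ S then (1 : ℝ) else -1) • (if j ∈ S then f j else 1) := by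
      funext j; split <;> simp
    rw [h1, h2, aux_list_prod_smul]
    congr 1
    rw [Finset.prod_ite, Finset.prod_const_one, Finset.prod_const, one_mul]
    congr 1
    · have hfc : (Finset.filter (fun x => x ∉ S) Finset.univ) = Sᶜ := by
        ext j; simp
      rw [hfc, Finset.card_compl, Fintype.card_fin]
  simp_rw [hterm]
  -- Step C: inclusion-exclusion gives the product of (f j - 1)
  have hC : (∑ S : Finset (Fin k),
        (List.ofFn fun j : Fin k => if j ∈ S then f j else (-1 : A)).prod)
      = (List.ofFn fun j : Fin k => f j - 1).prod := by
    rw [Fintype.sum_equiv (finsetBoolEquiv (k := k))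
      (fun S => (List.ofFn fun j : Fin k => if j ∈ S then f j else (-1 : A)).prod)
      (fun c => (List.ofFn fun j : Fin k => if c j then f j else (-1 : A)).prod)
      (fun S => by simp [finsetBoolEquiv])]
    have := (aux_list_prod_expand (Finset.univ : Finset Bool) k
      (fun j b => if b then f j else (-1 : A))).symm
    rw [Fintype.piFinset_univ,
      show (fun j : Fin k => ∑ b : Bool, if b then f j else (-1 : A)) = fun j => f j - 1
        from funext fun j => by simp [sub_eq_add_neg]] at this
    exact this
  rw [hC]
  -- Step D: each f j - 1 is a sum of homogeneous pieces of degree ≥ 1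
  have hrange : Finset.range (k + 1) = insert 0 (Finset.Icc 1 k) := by
    ext m; simp [Nat.lt_succ_iff, Nat.one_le_iff_ne_zero]; omega
  have hD : (fun j : Fin k => f j - 1)
      = fun j => ∑ m ∈ Finset.Icc 1 k,
          ((m.factorial : ℝ))⁻¹ • TensorAlgebra.ι ℝ (Pi.single (i j) (1 : ℝ)) ^ m := by
    funext j
    simp only [hf]
    unfold truncExp
    rw [hrange, Finset.sum_insert (by simp)]
    simp only [pow_zero, Nat.factorial_zero, Nat.cast_one, inv_one, one_smul]
    exact add_sub_cancel_left 1 _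
  rw [hD, aux_list_prod_expand, map_sum]
  have hmem1 : (fun _ : Fin k => 1) ∈ Fintype.piFinset (fun _ : Fin k => Finset.Icc 1 k) := by
    rw [Fintype.mem_piFinset]; intro j; simp [hk]
  have h0 : ∀ m ∈ Fintype.piFinset (fun _ : Fin k => Finset.Icc 1 k),
      m ≠ (fun _ : Fin k => 1) →
      degProj d k ((List.ofFn fun j : Fin k =>
        ((m j).factorial : ℝ)⁻¹ • TensorAlgebra.ι ℝ (Pi.single (i j) (1 : ℝ)) ^ m j).prod)
        = 0 := by
    intro m hm hne
    rw [aux_list_prod_smul, map_smul]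
    have hmem : ∀ j, 1 ≤ m j := by
      rw [Fintype.mem_piFinset] at hm
      intro j
      exact (Finset.mem_Icc.mp (hm j)).1
    have hj : ∃ j, 1 < m j := by
      by_contra h
      push_neg at h
      exact hne (funext fun j => le_antisymm (h j) (hmem j))
    obtain ⟨j0, hj0⟩ := hj
    have hsum : k < ∑ j, m j := by
      calc k = ∑ _j : Fin k, 1 := by simp
      _ < ∑ j, m j := Finset.sum_lt_sum (fun j _ => hmem j) ⟨j0, Finset.mem_univ _, hj0⟩
    have hmm := aux_prod_pow_mem k (fun j => Pi.single (i j) (1 : ℝ)) m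
    rw [degProj, GradedAlgebra.proj_apply,
      DirectSum.decompose_of_mem_ne _ hmm (by omega), smul_zero]
  rw [Finset.sum_eq_single_of_mem (fun _ : Fin k => 1) hmem1 h0]
  simp only [Nat.factorial_one, Nat.cast_one, inv_one, one_smul, pow_one]
  have hmm := aux_prod_pow_mem k (fun j => Pi.single (i j) (1 : ℝ)) (fun _ => 1)
  simp only [pow_one, Finset.sum_const, Finset.card_univ, Fintype.card_fin,
    smul_eq_mul, mul_one] at hmm
  rw [degProj, GradedAlgebra.proj_apply, DirectSum.decompose_of_mem_same _ hmm]
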